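/- arXiv:1503.02105 — 3 statements merged into one kernel-verified Lean document; each statement's English description precedes it below -/
import Mathlib

section
/- Let k ≥ 2 and let G be a K_{1,k+1}-induced-saturated graph on n vertices. Then the set S of vertices of degree at most k-1 has size at most k, and consequently G has at least nk/2 - k²/2 edges. -/
open SimpleGraph

/-- `G` contains an induced copy of `H`. -/
def HasInducedCopy {W V : Type*} (H : SimpleGraph W) (G : SimpleGraph V) : Prop :=
  Nonempty (H ↪g G)

/-- `G` is `H`-induced-saturated: `G` has no induced copy of `H`, but deleting any edge
or adding any non-edge creates an induced copy of `H`. -/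
def IsIndSat {V W : Type*} (G : SimpleGraph V) (H : SimpleGraph W) : Prop :=
  ¬ HasInducedCopy H G ∧
  (∀ u v : V, G.Adj u v → HasInducedCopy H (G.deleteEdges {s(u, v)})) ∧
  (∀ u v : V, u ≠ v → ¬ G.Adj u v →
    HasInducedCopy H (G ⊔ SimpleGraph.fromEdgeSet {s(u, v)}))

/-- The star `K_{1,m}` with center `0` and `m` leaves. -/
def starGraph (m : ℕ) : SimpleGraph (Fin (m + 1)) :=
  SimpleGraph.fromRel (fun i _ => i = 0)

/-- The Cartesian product of `k` copies of `K₃`: vertices are functions `Fin k → Fin 3`,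
adjacent iff they differ in exactly one coordinate. -/
def rook3 (k : ℕ) : SimpleGraph (Fin k → Fin 3) :=
  SimpleGraph.fromRel (fun x y => (Finset.univ.filter fun i => x i ≠ y i).card = 1)

lemma star_adj {m : ℕ} {a b : Fin (m+1)} :
    (_root_.starGraph m).Adj a b ↔ a ≠ b ∧ (a = 0 ∨ b = 0) := by
  simp [_root_.starGraph, SimpleGraph.fromRel_adj, or_comm]

/-- If the star embeds into `G + uv` with center mapped to `u` and `v` the image of
leaf `b`, then `u` has at least `k` neighbors in `G`. -/
lemma center_deg {V : Type*} [Fintype V] [DecidableEq V] (k : ℕ)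
    (G : SimpleGraph V) [DecidableRel G.Adj] {u v : V}
    {E : Set (Sym2 V)} (hE : ∀ x, s(u,x) ∈ E → x = v)
    (f : _root_.starGraph (k+1) ↪g (G ⊔ SimpleGraph.fromEdgeSet E))
    {b : Fin (k+2)} (hb : b ≠ 0) (hfu : f 0 = u) (hfv : f b = v) :
    k ≤ G.degree u := by
  classical
  have hsub : ((Finset.univ.filter fun i : Fin (k+2) => i ≠ 0 ∧ i ≠ b).image f)
      ⊆ G.neighborFinset u := by
    intro x hx
    simp only [Finset.mem_image, Finset.mem_filter] at hx
    obtain ⟨i, ⟨_, hi0, hib⟩, rfl⟩ := hx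
    rw [SimpleGraph.mem_neighborFinset]
    have hadj : (G ⊔ SimpleGraph.fromEdgeSet E).Adj u (f i) := by
      have := f.map_adj_iff.mpr (star_adj.mpr ⟨fun e => hi0 e.symm, Or.inl rfl⟩)
      rwa [hfu] at this
    rcases hadj with h | h
    · exact h
    · exfalso
      rw [SimpleGraph.fromEdgeSet_adj] at h
      exact hib (f.injective ((hE _ h.1).trans hfv.symm ▸ rfl))
  have hcardle := Finset.card_le_card hsub
  rw [Finset.card_image_of_injective _ f.injective,
    SimpleGraph.card_neighborFinset_eq_degree] at hcardle
  have hfilt : (Finset.univ.filter fun i : Fin (k+2) => i ≠ 0 ∧ i ≠ b)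
      = Finset.univ \ {0, b} := by
    ext i; simp [not_or]
  rw [hfilt, Finset.card_sdiff_of_subset (Finset.subset_univ _)] at hcardle
  have h2 : ({0, b} : Finset (Fin (k+2))).card = 2 := by
    rw [Finset.card_insert_of_notMem (by simpa using Ne.symm hb), Finset.card_singleton]
  rw [h2] at hcardle
  simpa using hcardle

/-- Two low-degree vertices must be adjacent. -/
lemma low_deg_adj {V : Type*} [Fintype V] [DecidableEq V] (k : ℕ) (hk : 1 ≤ k)
    (G : SimpleGraph V) [DecidableRel G.Adj]
    (h1 : ¬ HasInducedCopy (_root_.starGraph (k+1)) G)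
    (h3 : ∀ u v : V, u ≠ v → ¬ G.Adj u v →
      HasInducedCopy (_root_.starGraph (k+1)) (G ⊔ SimpleGraph.fromEdgeSet {s(u, v)}))
    {u v : V} (hu : G.degree u ≤ k - 1) (hv : G.degree v ≤ k - 1)
    (hne : u ≠ v) : G.Adj u v := by
  classical
  by_contra hna
  obtain ⟨f⟩ := h3 u v hne hna
  by_cases hr : (∃ a, f a = u) ∧ (∃ b, f b = v)
  · obtain ⟨⟨a, ha⟩, ⟨b, hb⟩⟩ := hr
    have huv : (G ⊔ SimpleGraph.fromEdgeSet {s(u,v)}).Adj u v := by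
      right
      rw [SimpleGraph.fromEdgeSet_adj]
      exact ⟨rfl, hne⟩
    have huv : (_root_.starGraph (k+1)).Adj a b := by
      refine f.map_adj_iff.mp ?_
      rw [ha, hb]
      exact huv
    rw [star_adj] at huv
    rcases huv.2 with h0 | h0
    · subst h0
      have hb0 : b ≠ 0 := fun e => huv.1 e.symm
      have hEu : ∀ x, s(u,x) ∈ ({s(u,v)} : Set (Sym2 V)) → x = v := by
        intro x hx
        rw [Set.mem_singleton_iff, Sym2.eq_iff] at hx
        rcases hx with ⟨_, h2⟩ | ⟨h1, _⟩
        · exact h2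
        · exact absurd h1 hne
      have := center_deg k G hEu f hb0 ha hb
      omega
    · subst h0
      have ha0 : a ≠ 0 := huv.1
      have hEv : ∀ x, s(v,x) ∈ ({s(u,v)} : Set (Sym2 V)) → x = u := by
        intro x hx
        rw [Set.mem_singleton_iff, Sym2.eq_iff] at hx
        rcases hx with ⟨h1, _⟩ | ⟨_, h2⟩
        · exact absurd h1.symm hne
        · exact h2
      have := center_deg k G hEv f ha0 hb ha
      omega
  · -- embedding avoids u or v, so it is an embedding into G
    apply h1
    refine ⟨⟨f.toEmbedding, ?_⟩⟩
    intro a b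
    rw [← f.map_adj_iff]
    constructor
    · intro hadj; exact Or.inl hadj
    · rintro (hadj | hadj)
      · exact hadj
      · exfalso
        rw [SimpleGraph.fromEdgeSet_adj, Set.mem_singleton_iff, Sym2.eq_iff] at hadj
        rw [not_and_or] at hr
        rcases hadj.1 with ⟨h1', h2'⟩ | ⟨h1', h2'⟩ <;>
          rcases hr with hr | hr <;>
            [exact hr ⟨a, h1'⟩; exact hr ⟨b, h2'⟩; exact hr ⟨b, h2'⟩; exact hr ⟨a, h1'⟩]


/-- If `k ≥ 2` and `G` is a `K_{1,k+1}`-induced-saturated graph on `n`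
vertices, then the set of vertices of degree at most `k - 1` has size at most `k`, and
consequently `G` has at least `nk/2 - k²/2` edges. -/
theorem star_indSat_min_edges {V : Type*} [Fintype V] [DecidableEq V]
    (k n : ℕ) (hk : 2 ≤ k) (G : SimpleGraph V) [DecidableRel G.Adj]
    (hn : Fintype.card V = n) (h : IsIndSat G (_root_.starGraph (k + 1))) :
    (Finset.univ.filter fun v : V => G.degree v ≤ k - 1).card ≤ k ∧
    (n * k : ℝ) / 2 - (k ^ 2 : ℝ) / 2 ≤ (G.edgeFinset.card : ℝ) := by
  classical
  set S := Finset.univ.filter fun v : V => G.degree v ≤ k - 1 with hS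
  have hSk : S.card ≤ k := by
    rcases Finset.eq_empty_or_nonempty S with he | ⟨u, hu⟩
    · simp [he]
    · have hdu : G.degree u ≤ k - 1 := (Finset.mem_filter.mp hu).2
      have hsub : S.erase u ⊆ G.neighborFinset u := by
        intro v hv
        rw [SimpleGraph.mem_neighborFinset]
        have hvu : v ≠ u := Finset.ne_of_mem_erase hv
        have hvS : v ∈ S := Finset.mem_of_mem_erase hv
        have hdv : G.degree v ≤ k - 1 := (Finset.mem_filter.mp hvS).2
        exact (low_deg_adj k (by omega) G h.1 h.2.2 hdv hdu hvu).symm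
      have := Finset.card_le_card hsub
      rw [Finset.card_erase_of_mem hu, SimpleGraph.card_neighborFinset_eq_degree] at this
      omega
  refine ⟨hSk, ?_⟩
  have hsum : (Fintype.card V - S.card) * k ≤ 2 * G.edgeFinset.card := by
    rw [← SimpleGraph.sum_degrees_eq_twice_card_edges]
    calc (Fintype.card V - S.card) * k
        = ∑ _v ∈ Finset.univ \ S, k := by
          rw [Finset.sum_const, smul_eq_mul, Finset.card_sdiff_of_subset (Finset.subset_univ _),
            Finset.card_univ]
      _ ≤ ∑ v ∈ Finset.univ \ S, G.degree v := by
          refine Finset.sum_le_sum fun v hv => ?_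
          have : v ∉ S := (Finset.mem_sdiff.mp hv).2
          rw [hS, Finset.mem_filter] at this
          push_neg at this
          have := this (Finset.mem_univ v)
          omega
      _ ≤ ∑ v, G.degree v := Finset.sum_le_sum_of_subset (Finset.sdiff_subset)
  rcases le_or_gt k n with hkn | hkn
  · have h1 : (n - k) * k ≤ 2 * G.edgeFinset.card := by
      refine le_trans ?_ hsum
      rw [hn]
      exact Nat.mul_le_mul_right k (by omega)
    have := (Nat.cast_le (α := ℝ)).mpr h1
    rw [Nat.cast_mul, Nat.cast_sub hkn] at this
    push_cast at this ⊢
    nlinarith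
  · have hn' : (n : ℝ) ≤ (k : ℝ) := by exact_mod_cast hkn.le
    have hE : (0 : ℝ) ≤ (G.edgeFinset.card : ℝ) := Nat.cast_nonneg _
    have hk0 : (0 : ℝ) ≤ (k : ℝ) := Nat.cast_nonneg _
    nlinarith
end

section
/- If G is a 4-regular claw-induced-saturated graph, then every edge of G lies in exactly one or exactly two triangles. -/
open SimpleGraph

/-- The claw `K_{1,3}`: star with center `0` and leaves `1, 2, 3`. -/
def claw : SimpleGraph (Fin 4) :=
  SimpleGraph.fromRel (fun i _ => i = 0)

lemma claw_adj (i j : Fin 4) : claw.Adj i j ↔ i ≠ j ∧ (i = 0 ∨ j = 0) := by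
  simp [claw, SimpleGraph.fromRel_adj]

lemma no_claw_config {V : Type*} {G : SimpleGraph V} (hG : ¬ HasInducedCopy claw G)
    {x a b c : V} (hxa : G.Adj x a) (hxb : G.Adj x b) (hxc : G.Adj x c)
    (hab : ¬ G.Adj a b) (hac : ¬ G.Adj a c) (hbc : ¬ G.Adj b c)
    (hab' : a ≠ b) (hac' : a ≠ c) (hbc' : b ≠ c) : False := by
  apply hG
  have hxa' := hxa.ne
  have hxb' := hxb.ne
  have hxc' := hxc.ne
  have hba : ¬ G.Adj b a := fun h => hab h.symm
  have hca : ¬ G.Adj c a := fun h => hac h.symm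
  have hcb : ¬ G.Adj c b := fun h => hbc h.symm
  refine ⟨⟨⟨![x,a,b,c], ?_⟩, ?_⟩⟩
  · intro i j hij
    fin_cases i <;> fin_cases j <;> simp_all
  · intro i j
    show G.Adj (![x,a,b,c] i) (![x,a,b,c] j) ↔ claw.Adj i j
    fin_cases i <;> fin_cases j <;>
      simp_all [claw_adj, hxa.symm, hxb.symm, hxc.symm, Function.Embedding.coeFn_mk]

/-- helper: one of the six symmetric cases -/
lemma del_claw_core {V : Type*} {G : SimpleGraph V} {u v x a b c : V} (hne : u ≠ v)
    (hau : a = u) (hbv : b = v)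
    (hxa : G.Adj x a) (hxb : G.Adj x b) (hxc : G.Adj x c)
    (nac : G.Adj a c → s(a,c) = s(u,v)) (nbc : G.Adj b c → s(b,c) = s(u,v))
    (hac' : a ≠ c) (hbc' : b ≠ c) :
    ∃ x w, G.Adj u x ∧ G.Adj v x ∧ G.Adj x w ∧ ¬ G.Adj u w ∧ ¬ G.Adj v w := by
  subst hau hbv
  refine ⟨x, c, hxa.symm, hxb.symm, hxc, ?_, ?_⟩
  · intro hc
    rcases Sym2.eq_iff.mp (nac hc) with ⟨_, h2⟩ | ⟨h1, _⟩
    · exact hbc' h2.symm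
    · exact hne h1
  · intro hc
    rcases Sym2.eq_iff.mp (nbc hc) with ⟨h1, _⟩ | ⟨_, h2⟩
    · exact hne h1.symm
    · exact hac' h2.symm

lemma del_claw {V : Type*} {G : SimpleGraph V} (hG : ¬ HasInducedCopy claw G)
    {u v : V} (huv : G.Adj u v)
    (hdel : HasInducedCopy claw (G.deleteEdges {s(u, v)})) :
    ∃ x w, G.Adj u x ∧ G.Adj v x ∧ G.Adj x w ∧ ¬ G.Adj u w ∧ ¬ G.Adj v w := by
  obtain ⟨f⟩ := hdel
  set G' := G.deleteEdges {s(u, v)} with hG'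
  have hadj : ∀ p q : V, G'.Adj p q ↔ G.Adj p q ∧ s(p,q) ≠ s(u,v) := by
    intro p q; simp [hG', SimpleGraph.deleteEdges_adj]
  have memb : ∀ i j : Fin 4, claw.Adj i j → G'.Adj (f i) (f j) :=
    fun i j hij => f.map_rel_iff.mpr hij
  have nmemb : ∀ i j : Fin 4, ¬ claw.Adj i j → ¬ G'.Adj (f i) (f j) :=
    fun i j hij h => hij (f.map_rel_iff.mp h)
  have hinj : ∀ i j : Fin 4, i ≠ j → f i ≠ f j := fun i j hij h => hij (f.injective h)
  have h01 := (hadj _ _).mp (memb 0 1 ((claw_adj 0 1).mpr (by decide)))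
  have h02 := (hadj _ _).mp (memb 0 2 ((claw_adj 0 2).mpr (by decide)))
  have h03 := (hadj _ _).mp (memb 0 3 ((claw_adj 0 3).mpr (by decide)))
  have n12 : G.Adj (f 1) (f 2) → s(f 1, f 2) = s(u,v) := by
    have := nmemb 1 2 (by rw [claw_adj]; decide)
    rw [hadj] at this; tauto
  have n13 : G.Adj (f 1) (f 3) → s(f 1, f 3) = s(u,v) := by
    have := nmemb 1 3 (by rw [claw_adj]; decide)
    rw [hadj] at this; tauto
  have n23 : G.Adj (f 2) (f 3) → s(f 2, f 3) = s(u,v) := by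
    have := nmemb 2 3 (by rw [claw_adj]; decide)
    rw [hadj] at this; tauto
  have d12 : f 1 ≠ f 2 := hinj 1 2 (by decide)
  have d13 : f 1 ≠ f 3 := hinj 1 3 (by decide)
  have d23 : f 2 ≠ f 3 := hinj 2 3 (by decide)
  have hne := huv.ne
  by_cases e12 : G.Adj (f 1) (f 2)
  · rcases Sym2.eq_iff.mp (n12 e12) with ⟨h1, h2⟩ | ⟨h1, h2⟩
    · exact del_claw_core hne h1 h2 h01.1 h02.1 h03.1 n13 n23 d13 d23
    · exact del_claw_core hne h2 h1 h02.1 h01.1 h03.1 n23 n13 d23 d13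
  by_cases e13 : G.Adj (f 1) (f 3)
  · have n32 : G.Adj (f 3) (f 2) → s(f 3, f 2) = s(u,v) := by
      intro h; rw [Sym2.eq_swap]; exact n23 h.symm
    rcases Sym2.eq_iff.mp (n13 e13) with ⟨h1, h2⟩ | ⟨h1, h2⟩
    · exact del_claw_core hne h1 h2 h01.1 h03.1 h02.1 n12 n32 d12 d23.symm
    · exact del_claw_core hne h2 h1 h03.1 h01.1 h02.1 n32 n12 d23.symm d12
  by_cases e23 : G.Adj (f 2) (f 3)
  · have n21 : G.Adj (f 2) (f 1) → s(f 2, f 1) = s(u,v) := by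
      intro h; rw [Sym2.eq_swap]; exact n12 h.symm
    have n31 : G.Adj (f 3) (f 1) → s(f 3, f 1) = s(u,v) := by
      intro h; rw [Sym2.eq_swap]; exact n13 h.symm
    rcases Sym2.eq_iff.mp (n23 e23) with ⟨h1, h2⟩ | ⟨h1, h2⟩
    · exact del_claw_core hne h1 h2 h02.1 h03.1 h01.1 n21 n31 d12.symm d13.symm
    · exact del_claw_core hne h2 h1 h03.1 h02.1 h01.1 n31 n21 d13.symm d12.symm
  · exact absurd (no_claw_config hG h01.1 h02.1 h03.1 e12 e13 e23 d12 d13 d23) not_false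

/-- In a 4-regular claw-induced-saturated graph, every edge lies in exactly
one or exactly two triangles (the number of common neighbors of its endpoints is 1 or 2). -/
theorem claw_indSat_four_regular_triangles {V : Type*} [Fintype V] [DecidableEq V]
    (G : SimpleGraph V) [DecidableRel G.Adj]
    (hreg : ∀ v : V, G.degree v = 4) (h : IsIndSat G claw) :
    ∀ u v : V, G.Adj u v →
      (G.neighborFinset u ∩ G.neighborFinset v).card = 1 ∨
      (G.neighborFinset u ∩ G.neighborFinset v).card = 2 := by
  intro u v huv
  obtain ⟨hfree, hdelsat, -⟩ := h
  have key : ∀ p q : V, G.Adj p q →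
      ∃ x w, G.Adj p x ∧ G.Adj q x ∧ G.Adj x w ∧ ¬ G.Adj p w ∧ ¬ G.Adj q w :=
    fun p q hpq => del_claw hfree hpq (hdelsat p q hpq)
  have hne := huv.ne
  -- lower bound
  obtain ⟨a, w, hua, hva, haw, nuw, nvw⟩ := key u v huv
  have hamem : a ∈ G.neighborFinset u ∩ G.neighborFinset v := by
    simp [Finset.mem_inter, mem_neighborFinset, hua, hva]
  have h1 : 1 ≤ (G.neighborFinset u ∩ G.neighborFinset v).card :=
    Finset.card_pos.mpr ⟨a, hamem⟩
  -- upper bound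
  have hsubU : G.neighborFinset u ∩ G.neighborFinset v ⊆ (G.neighborFinset u).erase v := by
    intro z hz
    rw [Finset.mem_inter, mem_neighborFinset, mem_neighborFinset] at hz
    rw [Finset.mem_erase, mem_neighborFinset]
    exact ⟨hz.2.ne', hz.1⟩
  have hsubV : G.neighborFinset u ∩ G.neighborFinset v ⊆ (G.neighborFinset v).erase u := by
    intro z hz
    rw [Finset.mem_inter, mem_neighborFinset, mem_neighborFinset] at hz
    rw [Finset.mem_erase, mem_neighborFinset]
    exact ⟨hz.1.ne', hz.2⟩
  have cardU : ((G.neighborFinset u).erase v).card = 3 := by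
    rw [Finset.card_erase_of_mem (by rwa [mem_neighborFinset]),
      card_neighborFinset_eq_degree, hreg]
  have cardV : ((G.neighborFinset v).erase u).card = 3 := by
    rw [Finset.card_erase_of_mem (by rw [mem_neighborFinset]; exact huv.symm),
      card_neighborFinset_eq_degree, hreg]
  have h3 : (G.neighborFinset u ∩ G.neighborFinset v).card ≤ 3 := by
    calc (G.neighborFinset u ∩ G.neighborFinset v).card
        ≤ ((G.neighborFinset u).erase v).card := Finset.card_le_card hsubU
      _ = 3 := cardU
  have hne3 : (G.neighborFinset u ∩ G.neighborFinset v).card ≠ 3 := by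
    intro hc3
    have hEqU : G.neighborFinset u ∩ G.neighborFinset v = (G.neighborFinset u).erase v :=
      Finset.eq_of_subset_of_card_le hsubU (by omega)
    have hEqV : G.neighborFinset u ∩ G.neighborFinset v = (G.neighborFinset v).erase u :=
      Finset.eq_of_subset_of_card_le hsubV (by omega)
    have hiff : ∀ z : V, z ≠ u → z ≠ v → (G.Adj u z ↔ G.Adj v z) := by
      intro z hzu hzv
      have : z ∈ (G.neighborFinset u).erase v ↔ z ∈ (G.neighborFinset v).erase u := by
        rw [← hEqU, ← hEqV]
      rw [Finset.mem_erase, Finset.mem_erase, mem_neighborFinset, mem_neighborFinset] at this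
      constructor
      · intro hz; exact (this.mp ⟨hzv, hz⟩).2
      · intro hz; exact (this.mpr ⟨hzu, hz⟩).2
    -- apply key to edge (a,u)
    obtain ⟨y, w2, hay, huy, hyw2, naw2, nuw2⟩ := key a u hua.symm
    have hw2u : w2 ≠ u := fun hh => naw2 (hh ▸ hua.symm)
    have hw2v : w2 ≠ v := fun hh => nuw2 (hh ▸ huv)
    by_cases hyv : y = v
    · subst hyv
      exact nuw2 ((hiff w2 hw2u hw2v).mpr hyw2)
    · have hvy : G.Adj v y := (hiff y huy.ne' hyv).mp huy
      have nvw2 : ¬ G.Adj v w2 := fun hh => nuw2 ((hiff w2 hw2u hw2v).mpr hh)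
      -- N(y) = {a, u, v, w2}
      have hw2a : w2 ≠ a := fun hh => nuw2 (hh ▸ hua)
      have hsubN : ({a, u, v, w2} : Finset V) ⊆ G.neighborFinset y := by
        intro z hz
        rw [mem_neighborFinset]
        rcases Finset.mem_insert.mp hz with rfl | hz
        · exact hay.symm
        rcases Finset.mem_insert.mp hz with rfl | hz
        · exact huy.symm
        rcases Finset.mem_insert.mp hz with rfl | hz
        · exact hvy.symm
        · rw [Finset.mem_singleton] at hz; subst hz; exact hyw2
      have hcard4 : ({a, u, v, w2} : Finset V).card = 4 := by
        have dau : a ≠ u := hua.ne'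
        have dav : a ≠ v := hva.ne'
        rw [Finset.card_insert_of_notMem (by simp [dau, dav, hw2a.symm]),
          Finset.card_insert_of_notMem (by simp [hne, hw2u.symm]),
          Finset.card_insert_of_notMem (by simp [hw2v.symm]),
          Finset.card_singleton]
      have hNy : ({a, u, v, w2} : Finset V) = G.neighborFinset y :=
        Finset.eq_of_subset_of_card_le hsubN
          (by rw [card_neighborFinset_eq_degree, hreg, hcard4])
      obtain ⟨z, w3, hyz, hw2z, -, -, -⟩ := key y w2 hyw2
      have hz : z ∈ ({a, u, v, w2} : Finset V) := by
        rw [hNy, mem_neighborFinset]; exact hyz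
      simp only [Finset.mem_insert, Finset.mem_singleton] at hz
      rcases hz with rfl | rfl | rfl | rfl
      · exact naw2 hw2z.symm
      · exact nuw2 hw2z.symm
      · exact nvw2 hw2z.symm
      · exact G.irrefl hw2z
  omega
end

section
/- The icosahedron graph is C_4-induced-saturated: it contains no induced 4-cycle, but deleting any edge or adding any non-edge creates an induced 4-cycle. -/
open SimpleGraph

/-- The icosahedron: two wheels with 5 spokes (wheel `i` has center `(i, none)` and outer
cycle `(i, some ℓ)` for `ℓ : ZMod 5`), with outer cycles joined by the zig-zag edges
`(0, some ℓ) ~ (1, some ℓ)` and `(0, some ℓ) ~ (1, some (ℓ+1))`. -/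
def icosahedron : SimpleGraph (Fin 2 × Option (ZMod 5)) :=
  SimpleGraph.fromRel (fun x y =>
    (x.1 = y.1 ∧ x.2 = none) ∨
    (x.1 = y.1 ∧ ∃ ℓ : ZMod 5, x.2 = some ℓ ∧ y.2 = some (ℓ + 1)) ∨
    (x.1 = 0 ∧ y.1 = 1 ∧ ∃ ℓ : ZMod 5, x.2 = some ℓ ∧ (y.2 = some ℓ ∨ y.2 = some (ℓ + 1))))

/-- The cycle `C₄` on four vertices. -/
def cycle4 : SimpleGraph (ZMod 4) :=
  SimpleGraph.fromRel (fun i j => j = i + 1)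

abbrev V := Fin 2 × Option (ZMod 5)

instance : DecidableRel icosahedron.Adj := fun x y =>
  decidable_of_iff _ (SimpleGraph.fromRel_adj _ x y).symm

instance : DecidableRel cycle4.Adj := fun x y =>
  decidable_of_iff _ (SimpleGraph.fromRel_adj _ x y).symm

instance singletonEdgeDecidable {V : Type*} [DecidableEq V] (e : Sym2 V) :
    DecidablePred (· ∈ ({e} : Set (Sym2 V))) := fun x =>
  decidable_of_iff (x = e) (Set.mem_singleton_iff).symm

instance deleteEdgesDecidable {V : Type*} (G : SimpleGraph V) [DecidableRel G.Adj]
    (s : Set (Sym2 V)) [DecidablePred (· ∈ s)] :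
    DecidableRel (G.deleteEdges s).Adj := fun _ _ =>
  decidable_of_iff _ SimpleGraph.deleteEdges_adj.symm

instance fromEdgeSetDecidable {V : Type*} [DecidableEq V] (s : Set (Sym2 V))
    [DecidablePred (· ∈ s)] : DecidableRel (SimpleGraph.fromEdgeSet s).Adj := fun _ _ =>
  decidable_of_iff _ (SimpleGraph.fromEdgeSet_adj _).symm

/-- `(a,b,c,d)` spans an induced 4-cycle in `G`. -/
def Quad {V : Type*} (G : SimpleGraph V) (q : V × V × V × V) : Prop :=
  q.1 ≠ q.2.2.1 ∧ q.2.1 ≠ q.2.2.2 ∧ G.Adj q.1 q.2.1 ∧ G.Adj q.2.1 q.2.2.1 ∧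
    G.Adj q.2.2.1 q.2.2.2 ∧ G.Adj q.2.2.2 q.1 ∧ ¬ G.Adj q.1 q.2.2.1 ∧ ¬ G.Adj q.2.1 q.2.2.2

instance {V : Type*} [DecidableEq V] (G : SimpleGraph V) [DecidableRel G.Adj]
    (q : V × V × V × V) : Decidable (Quad G q) :=
  inferInstanceAs (Decidable (q.1 ≠ q.2.2.1 ∧ q.2.1 ≠ q.2.2.2 ∧ G.Adj q.1 q.2.1 ∧
    G.Adj q.2.1 q.2.2.1 ∧ G.Adj q.2.2.1 q.2.2.2 ∧ G.Adj q.2.2.2 q.1 ∧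
    ¬ G.Adj q.1 q.2.2.1 ∧ ¬ G.Adj q.2.1 q.2.2.2))

instance cycle4AdjFinDecidable (i j : Fin 4) : Decidable (cycle4.Adj i j) :=
  (inferInstance : DecidableRel cycle4.Adj) i j

lemma hasCopyC4 {V : Type*} (G : SimpleGraph V) (a b c d : V)
    (hac : a ≠ c) (hbd : b ≠ d) (hab : G.Adj a b) (hbc : G.Adj b c) (hcd : G.Adj c d)
    (hda : G.Adj d a) (nac : ¬ G.Adj a c) (nbd : ¬ G.Adj b d) : HasInducedCopy cycle4 G := by
  have hab' := hab.ne; have hbc' := hbc.ne; have hcd' := hcd.ne; have hda' := hda.ne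
  let f : ZMod 4 → V := fun i => [a, b, c, d].getD i.val a
  refine ⟨⟨⟨f, ?_⟩, ?_⟩⟩
  · intro i j hij
    fin_cases i <;> fin_cases j
    · rfl
    · exact absurd hij hab'
    · exact absurd hij hac
    · exact absurd hij.symm hda'
    · exact absurd hij.symm hab'
    · rfl
    · exact absurd hij hbc'
    · exact absurd hij hbd
    · exact absurd hij.symm hac
    · exact absurd hij.symm hbc'
    · rfl
    · exact absurd hij hcd'
    · exact absurd hij hda'
    · exact absurd hij.symm hbd
    · exact absurd hij.symm hcd'
    · rfl
  · intro i j
    fin_cases i <;> fin_cases j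
    · exact iff_of_false (G.irrefl) (by decide)
    · exact iff_of_true hab (by decide)
    · exact iff_of_false nac (by decide)
    · exact iff_of_true hda.symm (by decide)
    · exact iff_of_true hab.symm (by decide)
    · exact iff_of_false (G.irrefl) (by decide)
    · exact iff_of_true hbc (by decide)
    · exact iff_of_false nbd (by decide)
    · exact iff_of_false (fun h => nac h.symm) (by decide)
    · exact iff_of_true hbc.symm (by decide)
    · exact iff_of_false (G.irrefl) (by decide)
    · exact iff_of_true hcd (by decide)
    · exact iff_of_true hda (by decide)
    · exact iff_of_false (fun h => nbd h.symm) (by decide)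
    · exact iff_of_true hcd.symm (by decide)
    · exact iff_of_false (G.irrefl) (by decide)

lemma hasCopy_of_quad {V : Type*} (G : SimpleGraph V) (q : V × V × V × V)
    (h : Quad G q) : HasInducedCopy cycle4 G :=
  hasCopyC4 G q.1 q.2.1 q.2.2.1 q.2.2.2 h.1 h.2.1 h.2.2.1 h.2.2.2.1 h.2.2.2.2.1
    h.2.2.2.2.2.1 h.2.2.2.2.2.2.1 h.2.2.2.2.2.2.2

lemma quad_of_hasCopy {V : Type*} (G : SimpleGraph V)
    (h : HasInducedCopy cycle4 G) : ∃ q, Quad G q := by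
  obtain ⟨e⟩ := h
  refine ⟨(e 0, e 1, e 2, e 3), ?_, ?_, ?_, ?_, ?_, ?_, ?_, ?_⟩
  · exact fun h => absurd (e.injective h) (by decide)
  · exact fun h => absurd (e.injective h) (by decide)
  · exact e.map_rel_iff.mpr (by decide)
  · exact e.map_rel_iff.mpr (by decide)
  · exact e.map_rel_iff.mpr (by decide)
  · exact e.map_rel_iff.mpr (by decide)
  · exact fun h => absurd (e.map_rel_iff.mp h) (by decide)
  · exact fun h => absurd (e.map_rel_iff.mp h) (by decide)

def delTable : List ((V × V) × (V × V × V × V)) := [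
  ((((0, none) : V), ((0, some 0) : V)), (((0, none) : V), ((0, some 1) : V), ((0, some 0) : V), ((0, some 4) : V))),
  ((((0, none) : V), ((0, some 1) : V)), (((0, none) : V), ((0, some 0) : V), ((0, some 1) : V), ((0, some 2) : V))),
  ((((0, none) : V), ((0, some 2) : V)), (((0, none) : V), ((0, some 1) : V), ((0, some 2) : V), ((0, some 3) : V))),
  ((((0, none) : V), ((0, some 3) : V)), (((0, none) : V), ((0, some 2) : V), ((0, some 3) : V), ((0, some 4) : V))),
  ((((0, none) : V), ((0, some 4) : V)), (((0, none) : V), ((0, some 0) : V), ((0, some 4) : V), ((0, some 3) : V))),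
  ((((0, some 0) : V), ((0, none) : V)), (((0, none) : V), ((0, some 1) : V), ((0, some 0) : V), ((0, some 4) : V))),
  ((((0, some 0) : V), ((0, some 1) : V)), (((0, none) : V), ((0, some 0) : V), ((1, some 1) : V), ((0, some 1) : V))),
  ((((0, some 0) : V), ((0, some 4) : V)), (((0, none) : V), ((0, some 0) : V), ((1, some 0) : V), ((0, some 4) : V))),
  ((((0, some 0) : V), ((1, some 0) : V)), (((0, some 0) : V), ((0, some 4) : V), ((1, some 0) : V), ((1, some 1) : V))),
  ((((0, some 0) : V), ((1, some 1) : V)), (((0, some 0) : V), ((0, some 1) : V), ((1, some 1) : V), ((1, some 0) : V))),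
  ((((0, some 1) : V), ((0, none) : V)), (((0, none) : V), ((0, some 0) : V), ((0, some 1) : V), ((0, some 2) : V))),
  ((((0, some 1) : V), ((0, some 0) : V)), (((0, none) : V), ((0, some 0) : V), ((1, some 1) : V), ((0, some 1) : V))),
  ((((0, some 1) : V), ((0, some 2) : V)), (((0, none) : V), ((0, some 1) : V), ((1, some 2) : V), ((0, some 2) : V))),
  ((((0, some 1) : V), ((1, some 1) : V)), (((0, some 0) : V), ((0, some 1) : V), ((1, some 2) : V), ((1, some 1) : V))),
  ((((0, some 1) : V), ((1, some 2) : V)), (((0, some 1) : V), ((0, some 2) : V), ((1, some 2) : V), ((1, some 1) : V))),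
  ((((0, some 2) : V), ((0, none) : V)), (((0, none) : V), ((0, some 1) : V), ((0, some 2) : V), ((0, some 3) : V))),
  ((((0, some 2) : V), ((0, some 1) : V)), (((0, none) : V), ((0, some 1) : V), ((1, some 2) : V), ((0, some 2) : V))),
  ((((0, some 2) : V), ((0, some 3) : V)), (((0, none) : V), ((0, some 2) : V), ((1, some 3) : V), ((0, some 3) : V))),
  ((((0, some 2) : V), ((1, some 2) : V)), (((0, some 1) : V), ((0, some 2) : V), ((1, some 3) : V), ((1, some 2) : V))),
  ((((0, some 2) : V), ((1, some 3) : V)), (((0, some 2) : V), ((0, some 3) : V), ((1, some 3) : V), ((1, some 2) : V))),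
  ((((0, some 3) : V), ((0, none) : V)), (((0, none) : V), ((0, some 2) : V), ((0, some 3) : V), ((0, some 4) : V))),
  ((((0, some 3) : V), ((0, some 2) : V)), (((0, none) : V), ((0, some 2) : V), ((1, some 3) : V), ((0, some 3) : V))),
  ((((0, some 3) : V), ((0, some 4) : V)), (((0, none) : V), ((0, some 3) : V), ((1, some 4) : V), ((0, some 4) : V))),
  ((((0, some 3) : V), ((1, some 3) : V)), (((0, some 2) : V), ((0, some 3) : V), ((1, some 4) : V), ((1, some 3) : V))),
  ((((0, some 3) : V), ((1, some 4) : V)), (((0, some 3) : V), ((0, some 4) : V), ((1, some 4) : V), ((1, some 3) : V))),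
  ((((0, some 4) : V), ((0, none) : V)), (((0, none) : V), ((0, some 0) : V), ((0, some 4) : V), ((0, some 3) : V))),
  ((((0, some 4) : V), ((0, some 0) : V)), (((0, none) : V), ((0, some 0) : V), ((1, some 0) : V), ((0, some 4) : V))),
  ((((0, some 4) : V), ((0, some 3) : V)), (((0, none) : V), ((0, some 3) : V), ((1, some 4) : V), ((0, some 4) : V))),
  ((((0, some 4) : V), ((1, some 0) : V)), (((0, some 0) : V), ((0, some 4) : V), ((1, some 4) : V), ((1, some 0) : V))),
  ((((0, some 4) : V), ((1, some 4) : V)), (((0, some 3) : V), ((0, some 4) : V), ((1, some 0) : V), ((1, some 4) : V))),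
  ((((1, none) : V), ((1, some 0) : V)), (((1, none) : V), ((1, some 1) : V), ((1, some 0) : V), ((1, some 4) : V))),
  ((((1, none) : V), ((1, some 1) : V)), (((1, none) : V), ((1, some 0) : V), ((1, some 1) : V), ((1, some 2) : V))),
  ((((1, none) : V), ((1, some 2) : V)), (((1, none) : V), ((1, some 1) : V), ((1, some 2) : V), ((1, some 3) : V))),
  ((((1, none) : V), ((1, some 3) : V)), (((1, none) : V), ((1, some 2) : V), ((1, some 3) : V), ((1, some 4) : V))),
  ((((1, none) : V), ((1, some 4) : V)), (((1, none) : V), ((1, some 0) : V), ((1, some 4) : V), ((1, some 3) : V))),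
  ((((1, some 0) : V), ((0, some 0) : V)), (((0, some 0) : V), ((0, some 4) : V), ((1, some 0) : V), ((1, some 1) : V))),
  ((((1, some 0) : V), ((0, some 4) : V)), (((0, some 0) : V), ((0, some 4) : V), ((1, some 4) : V), ((1, some 0) : V))),
  ((((1, some 0) : V), ((1, none) : V)), (((1, none) : V), ((1, some 1) : V), ((1, some 0) : V), ((1, some 4) : V))),
  ((((1, some 0) : V), ((1, some 1) : V)), (((0, some 0) : V), ((1, some 0) : V), ((1, none) : V), ((1, some 1) : V))),
  ((((1, some 0) : V), ((1, some 4) : V)), (((0, some 4) : V), ((1, some 0) : V), ((1, none) : V), ((1, some 4) : V))),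
  ((((1, some 1) : V), ((0, some 0) : V)), (((0, some 0) : V), ((0, some 1) : V), ((1, some 1) : V), ((1, some 0) : V))),
  ((((1, some 1) : V), ((0, some 1) : V)), (((0, some 0) : V), ((0, some 1) : V), ((1, some 2) : V), ((1, some 1) : V))),
  ((((1, some 1) : V), ((1, none) : V)), (((1, none) : V), ((1, some 0) : V), ((1, some 1) : V), ((1, some 2) : V))),
  ((((1, some 1) : V), ((1, some 0) : V)), (((0, some 0) : V), ((1, some 0) : V), ((1, none) : V), ((1, some 1) : V))),
  ((((1, some 1) : V), ((1, some 2) : V)), (((0, some 1) : V), ((1, some 1) : V), ((1, none) : V), ((1, some 2) : V))),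
  ((((1, some 2) : V), ((0, some 1) : V)), (((0, some 1) : V), ((0, some 2) : V), ((1, some 2) : V), ((1, some 1) : V))),
  ((((1, some 2) : V), ((0, some 2) : V)), (((0, some 1) : V), ((0, some 2) : V), ((1, some 3) : V), ((1, some 2) : V))),
  ((((1, some 2) : V), ((1, none) : V)), (((1, none) : V), ((1, some 1) : V), ((1, some 2) : V), ((1, some 3) : V))),
  ((((1, some 2) : V), ((1, some 1) : V)), (((0, some 1) : V), ((1, some 1) : V), ((1, none) : V), ((1, some 2) : V))),
  ((((1, some 2) : V), ((1, some 3) : V)), (((0, some 2) : V), ((1, some 2) : V), ((1, none) : V), ((1, some 3) : V))),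
  ((((1, some 3) : V), ((0, some 2) : V)), (((0, some 2) : V), ((0, some 3) : V), ((1, some 3) : V), ((1, some 2) : V))),
  ((((1, some 3) : V), ((0, some 3) : V)), (((0, some 2) : V), ((0, some 3) : V), ((1, some 4) : V), ((1, some 3) : V))),
  ((((1, some 3) : V), ((1, none) : V)), (((1, none) : V), ((1, some 2) : V), ((1, some 3) : V), ((1, some 4) : V))),
  ((((1, some 3) : V), ((1, some 2) : V)), (((0, some 2) : V), ((1, some 2) : V), ((1, none) : V), ((1, some 3) : V))),
  ((((1, some 3) : V), ((1, some 4) : V)), (((0, some 3) : V), ((1, some 3) : V), ((1, none) : V), ((1, some 4) : V))),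
  ((((1, some 4) : V), ((0, some 3) : V)), (((0, some 3) : V), ((0, some 4) : V), ((1, some 4) : V), ((1, some 3) : V))),
  ((((1, some 4) : V), ((0, some 4) : V)), (((0, some 3) : V), ((0, some 4) : V), ((1, some 0) : V), ((1, some 4) : V))),
  ((((1, some 4) : V), ((1, none) : V)), (((1, none) : V), ((1, some 0) : V), ((1, some 4) : V), ((1, some 3) : V))),
  ((((1, some 4) : V), ((1, some 0) : V)), (((0, some 4) : V), ((1, some 0) : V), ((1, none) : V), ((1, some 4) : V))),
  ((((1, some 4) : V), ((1, some 3) : V)), (((0, some 3) : V), ((1, some 3) : V), ((1, none) : V), ((1, some 4) : V)))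
]

def addTable : List ((V × V) × (V × V × V × V)) := [
  ((((0, none) : V), ((1, none) : V)), (((0, none) : V), ((0, some 0) : V), ((1, some 0) : V), ((1, none) : V))),
  ((((0, none) : V), ((1, some 0) : V)), (((0, none) : V), ((0, some 1) : V), ((1, some 1) : V), ((1, some 0) : V))),
  ((((0, none) : V), ((1, some 1) : V)), (((0, none) : V), ((0, some 2) : V), ((1, some 2) : V), ((1, some 1) : V))),
  ((((0, none) : V), ((1, some 2) : V)), (((0, none) : V), ((0, some 0) : V), ((1, some 1) : V), ((1, some 2) : V))),
  ((((0, none) : V), ((1, some 3) : V)), (((0, none) : V), ((0, some 1) : V), ((1, some 2) : V), ((1, some 3) : V))),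
  ((((0, none) : V), ((1, some 4) : V)), (((0, none) : V), ((0, some 0) : V), ((1, some 0) : V), ((1, some 4) : V))),
  ((((0, some 0) : V), ((0, some 2) : V)), (((0, some 0) : V), ((0, some 2) : V), ((0, some 3) : V), ((0, some 4) : V))),
  ((((0, some 0) : V), ((0, some 3) : V)), (((0, some 0) : V), ((0, some 1) : V), ((0, some 2) : V), ((0, some 3) : V))),
  ((((0, some 0) : V), ((1, none) : V)), (((0, some 0) : V), ((0, some 1) : V), ((1, some 2) : V), ((1, none) : V))),
  ((((0, some 0) : V), ((1, some 2) : V)), (((0, none) : V), ((0, some 0) : V), ((1, some 2) : V), ((0, some 2) : V))),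
  ((((0, some 0) : V), ((1, some 3) : V)), (((0, none) : V), ((0, some 0) : V), ((1, some 3) : V), ((0, some 2) : V))),
  ((((0, some 0) : V), ((1, some 4) : V)), (((0, none) : V), ((0, some 0) : V), ((1, some 4) : V), ((0, some 3) : V))),
  ((((0, some 1) : V), ((0, some 3) : V)), (((0, some 0) : V), ((0, some 1) : V), ((0, some 3) : V), ((0, some 4) : V))),
  ((((0, some 1) : V), ((0, some 4) : V)), (((0, some 1) : V), ((0, some 2) : V), ((0, some 3) : V), ((0, some 4) : V))),
  ((((0, some 1) : V), ((1, none) : V)), (((0, some 0) : V), ((0, some 1) : V), ((1, none) : V), ((1, some 0) : V))),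
  ((((0, some 1) : V), ((1, some 0) : V)), (((0, none) : V), ((0, some 1) : V), ((1, some 0) : V), ((0, some 4) : V))),
  ((((0, some 1) : V), ((1, some 3) : V)), (((0, none) : V), ((0, some 1) : V), ((1, some 3) : V), ((0, some 3) : V))),
  ((((0, some 1) : V), ((1, some 4) : V)), (((0, none) : V), ((0, some 1) : V), ((1, some 4) : V), ((0, some 3) : V))),
  ((((0, some 2) : V), ((0, some 0) : V)), (((0, some 0) : V), ((0, some 2) : V), ((0, some 3) : V), ((0, some 4) : V))),
  ((((0, some 2) : V), ((0, some 4) : V)), (((0, some 0) : V), ((0, some 1) : V), ((0, some 2) : V), ((0, some 4) : V))),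
  ((((0, some 2) : V), ((1, none) : V)), (((0, some 1) : V), ((0, some 2) : V), ((1, none) : V), ((1, some 1) : V))),
  ((((0, some 2) : V), ((1, some 0) : V)), (((0, none) : V), ((0, some 0) : V), ((1, some 0) : V), ((0, some 2) : V))),
  ((((0, some 2) : V), ((1, some 1) : V)), (((0, none) : V), ((0, some 0) : V), ((1, some 1) : V), ((0, some 2) : V))),
  ((((0, some 2) : V), ((1, some 4) : V)), (((0, none) : V), ((0, some 2) : V), ((1, some 4) : V), ((0, some 4) : V))),
  ((((0, some 3) : V), ((0, some 0) : V)), (((0, some 0) : V), ((0, some 1) : V), ((0, some 2) : V), ((0, some 3) : V))),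
  ((((0, some 3) : V), ((0, some 1) : V)), (((0, some 0) : V), ((0, some 1) : V), ((0, some 3) : V), ((0, some 4) : V))),
  ((((0, some 3) : V), ((1, none) : V)), (((0, some 2) : V), ((0, some 3) : V), ((1, none) : V), ((1, some 2) : V))),
  ((((0, some 3) : V), ((1, some 0) : V)), (((0, none) : V), ((0, some 0) : V), ((1, some 0) : V), ((0, some 3) : V))),
  ((((0, some 3) : V), ((1, some 1) : V)), (((0, none) : V), ((0, some 0) : V), ((1, some 1) : V), ((0, some 3) : V))),
  ((((0, some 3) : V), ((1, some 2) : V)), (((0, none) : V), ((0, some 1) : V), ((1, some 2) : V), ((0, some 3) : V))),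
  ((((0, some 4) : V), ((0, some 1) : V)), (((0, some 1) : V), ((0, some 2) : V), ((0, some 3) : V), ((0, some 4) : V))),
  ((((0, some 4) : V), ((0, some 2) : V)), (((0, some 0) : V), ((0, some 1) : V), ((0, some 2) : V), ((0, some 4) : V))),
  ((((0, some 4) : V), ((1, none) : V)), (((0, some 0) : V), ((0, some 4) : V), ((1, none) : V), ((1, some 1) : V))),
  ((((0, some 4) : V), ((1, some 1) : V)), (((0, none) : V), ((0, some 1) : V), ((1, some 1) : V), ((0, some 4) : V))),
  ((((0, some 4) : V), ((1, some 2) : V)), (((0, none) : V), ((0, some 1) : V), ((1, some 2) : V), ((0, some 4) : V))),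
  ((((0, some 4) : V), ((1, some 3) : V)), (((0, none) : V), ((0, some 2) : V), ((1, some 3) : V), ((0, some 4) : V))),
  ((((1, none) : V), ((0, none) : V)), (((0, none) : V), ((0, some 0) : V), ((1, some 0) : V), ((1, none) : V))),
  ((((1, none) : V), ((0, some 0) : V)), (((0, some 0) : V), ((0, some 1) : V), ((1, some 2) : V), ((1, none) : V))),
  ((((1, none) : V), ((0, some 1) : V)), (((0, some 0) : V), ((0, some 1) : V), ((1, none) : V), ((1, some 0) : V))),
  ((((1, none) : V), ((0, some 2) : V)), (((0, some 1) : V), ((0, some 2) : V), ((1, none) : V), ((1, some 1) : V))),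
  ((((1, none) : V), ((0, some 3) : V)), (((0, some 2) : V), ((0, some 3) : V), ((1, none) : V), ((1, some 2) : V))),
  ((((1, none) : V), ((0, some 4) : V)), (((0, some 0) : V), ((0, some 4) : V), ((1, none) : V), ((1, some 1) : V))),
  ((((1, some 0) : V), ((0, none) : V)), (((0, none) : V), ((0, some 1) : V), ((1, some 1) : V), ((1, some 0) : V))),
  ((((1, some 0) : V), ((0, some 1) : V)), (((0, none) : V), ((0, some 1) : V), ((1, some 0) : V), ((0, some 4) : V))),
  ((((1, some 0) : V), ((0, some 2) : V)), (((0, none) : V), ((0, some 0) : V), ((1, some 0) : V), ((0, some 2) : V))),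
  ((((1, some 0) : V), ((0, some 3) : V)), (((0, none) : V), ((0, some 0) : V), ((1, some 0) : V), ((0, some 3) : V))),
  ((((1, some 0) : V), ((1, some 2) : V)), (((0, some 0) : V), ((0, some 1) : V), ((1, some 2) : V), ((1, some 0) : V))),
  ((((1, some 0) : V), ((1, some 3) : V)), (((0, some 3) : V), ((0, some 4) : V), ((1, some 0) : V), ((1, some 3) : V))),
  ((((1, some 1) : V), ((0, none) : V)), (((0, none) : V), ((0, some 2) : V), ((1, some 2) : V), ((1, some 1) : V))),
  ((((1, some 1) : V), ((0, some 2) : V)), (((0, none) : V), ((0, some 0) : V), ((1, some 1) : V), ((0, some 2) : V))),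
  ((((1, some 1) : V), ((0, some 3) : V)), (((0, none) : V), ((0, some 0) : V), ((1, some 1) : V), ((0, some 3) : V))),
  ((((1, some 1) : V), ((0, some 4) : V)), (((0, none) : V), ((0, some 1) : V), ((1, some 1) : V), ((0, some 4) : V))),
  ((((1, some 1) : V), ((1, some 3) : V)), (((0, some 1) : V), ((0, some 2) : V), ((1, some 3) : V), ((1, some 1) : V))),
  ((((1, some 1) : V), ((1, some 4) : V)), (((0, some 0) : V), ((0, some 4) : V), ((1, some 4) : V), ((1, some 1) : V))),
  ((((1, some 2) : V), ((0, none) : V)), (((0, none) : V), ((0, some 0) : V), ((1, some 1) : V), ((1, some 2) : V))),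
  ((((1, some 2) : V), ((0, some 0) : V)), (((0, none) : V), ((0, some 0) : V), ((1, some 2) : V), ((0, some 2) : V))),
  ((((1, some 2) : V), ((0, some 3) : V)), (((0, none) : V), ((0, some 1) : V), ((1, some 2) : V), ((0, some 3) : V))),
  ((((1, some 2) : V), ((0, some 4) : V)), (((0, none) : V), ((0, some 1) : V), ((1, some 2) : V), ((0, some 4) : V))),
  ((((1, some 2) : V), ((1, some 0) : V)), (((0, some 0) : V), ((0, some 1) : V), ((1, some 2) : V), ((1, some 0) : V))),
  ((((1, some 2) : V), ((1, some 4) : V)), (((0, some 2) : V), ((0, some 3) : V), ((1, some 4) : V), ((1, some 2) : V))),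
  ((((1, some 3) : V), ((0, none) : V)), (((0, none) : V), ((0, some 1) : V), ((1, some 2) : V), ((1, some 3) : V))),
  ((((1, some 3) : V), ((0, some 0) : V)), (((0, none) : V), ((0, some 0) : V), ((1, some 3) : V), ((0, some 2) : V))),
  ((((1, some 3) : V), ((0, some 1) : V)), (((0, none) : V), ((0, some 1) : V), ((1, some 3) : V), ((0, some 3) : V))),
  ((((1, some 3) : V), ((0, some 4) : V)), (((0, none) : V), ((0, some 2) : V), ((1, some 3) : V), ((0, some 4) : V))),
  ((((1, some 3) : V), ((1, some 0) : V)), (((0, some 3) : V), ((0, some 4) : V), ((1, some 0) : V), ((1, some 3) : V))),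
  ((((1, some 3) : V), ((1, some 1) : V)), (((0, some 1) : V), ((0, some 2) : V), ((1, some 3) : V), ((1, some 1) : V))),
  ((((1, some 4) : V), ((0, none) : V)), (((0, none) : V), ((0, some 0) : V), ((1, some 0) : V), ((1, some 4) : V))),
  ((((1, some 4) : V), ((0, some 0) : V)), (((0, none) : V), ((0, some 0) : V), ((1, some 4) : V), ((0, some 3) : V))),
  ((((1, some 4) : V), ((0, some 1) : V)), (((0, none) : V), ((0, some 1) : V), ((1, some 4) : V), ((0, some 3) : V))),
  ((((1, some 4) : V), ((0, some 2) : V)), (((0, none) : V), ((0, some 2) : V), ((1, some 4) : V), ((0, some 4) : V))),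
  ((((1, some 4) : V), ((1, some 1) : V)), (((0, some 0) : V), ((0, some 4) : V), ((1, some 4) : V), ((1, some 1) : V))),
  ((((1, some 4) : V), ((1, some 2) : V)), (((0, some 2) : V), ((0, some 3) : V), ((1, some 4) : V), ((1, some 2) : V)))
]

def lookup (t : List ((V × V) × (V × V × V × V))) (u v : V) : V × V × V × V :=
  (((t.find? (fun p => p.1 = (u, v))).map Prod.snd).getD ((0, none), (0, none), (0, none), (0, none)))

set_option maxHeartbeats 4000000 in
lemma no_quad : ¬ ∃ a b c d : V, a ≠ c ∧ b ≠ d ∧ icosahedron.Adj a b ∧ icosahedron.Adj b c ∧ icosahedron.Adj c d ∧ icosahedron.Adj d a ∧ ¬icosahedron.Adj a c ∧ ¬icosahedron.Adj b d := by decide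

set_option maxHeartbeats 1000000 in
lemma del_quad : ∀ u v : V, icosahedron.Adj u v →
    Quad (icosahedron.deleteEdges {s(u, v)}) (lookup delTable u v) := by decide

set_option maxHeartbeats 1000000 in
lemma add_quad : ∀ u v : V, u ≠ v → ¬ icosahedron.Adj u v →
    Quad (icosahedron ⊔ SimpleGraph.fromEdgeSet {s(u, v)}) (lookup addTable u v) := by decide

/-- The icosahedron is `C₄`-induced-saturated. -/
theorem icosahedron_C4_indSat : IsIndSat icosahedron cycle4 := by
  refine ⟨fun h => ?_, fun u v h => ?_, fun u v h1 h2 => ?_⟩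
  · obtain ⟨q, hq⟩ := quad_of_hasCopy _ h
    exact no_quad ⟨q.1, q.2.1, q.2.2.1, q.2.2.2, hq.1, hq.2.1, hq.2.2.1, hq.2.2.2.1,
      hq.2.2.2.2.1, hq.2.2.2.2.2.1, hq.2.2.2.2.2.2.1, hq.2.2.2.2.2.2.2⟩
  · exact hasCopy_of_quad _ _ (del_quad u v h)
  · exact hasCopy_of_quad _ _ (add_quad u v h1 h2)
end
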